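/- arXiv:1711.06201 — 2 statements merged into one kernel-verified Lean document; each statement's English description precedes it below -/
import Mathlib

section
/- Suppose Σ_{j∈Λ*_p} r_j + Σ_{j,k∈Λ*_p} a_{j,k} > 0, and let μ_N be the unique stationary state of L_N on Ω_{N,p} with ρ_N(k) = E_{μ_N}[η_k]. Then for every 0 ≤ k < N one has ρ_N(k) = (k/N)·β + ((N−k)/N)·ρ_N(0). -/
open Finset Filter Topology

/-- Occupation value of a site. -/
def occ (b : Bool) : ℝ := if b then 1 else 0

/-- Flip the occupation variable at site `i`. -/
def flipCfg {m : ℕ} (η : Fin m → Bool) (i : Fin m) : Fin m → Bool :=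
  Function.update η i (!(η i))

/-- Exchange the occupation variables at sites `i` and `j`. -/
def swapCfg {m : ℕ} (η : Fin m → Bool) (i j : Fin m) : Fin m → Bool :=
  fun k => η (Equiv.swap i j k)

/-- A stationary state of a generator `L` on a finite set `S`. -/
def IsStationaryState {S : Type*} [Fintype S] (L : (S → ℝ) → S → ℝ) (μ : S → ℝ) : Prop :=
  (∀ x, 0 ≤ μ x) ∧ (∑ x, μ x = 1) ∧ ∀ f : S → ℝ, ∑ x, μ x * L f x = 0

/-- Expectation of `g` under the (finitely supported) measure `μ`. -/
def expVal {S : Type*} [Fintype S] (μ : S → ℝ) (g : S → ℝ) : ℝ := ∑ x, μ x * g x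

/- The sites of `Λ_{N,p} = {-p, …, N-1}` are indexed by `Fin (N+p)`, the index
`i` corresponding to the site `i - p`; the sites of `Λ*_p = {-p, …, 0}` are
indexed by `Fin (p+1)` in the same way. -/

/-- Embedding of `Λ*_p` into `Λ_{N,p}`. -/
def emb (N p : ℕ) (hN : 1 ≤ N) (j : Fin (p+1)) : Fin (N+p) :=
  ⟨j.1, by have := j.isLt; omega⟩

/-- Stirring on the sites `-p, …, -1` of the left boundary. -/
def LS (N p : ℕ) (hN : 1 ≤ N) (f : (Fin (N+p) → Bool) → ℝ) (η : Fin (N+p) → Bool) : ℝ :=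
  ∑ i : Fin p,
    (f (swapCfg η ⟨i.1, by have := i.isLt; omega⟩ ⟨i.1 + 1, by have := i.isLt; omega⟩) - f η)

/-- Reservoir dynamics on the left boundary. -/
def LR (N p : ℕ) (hN : 1 ≤ N) (r α : Fin (p+1) → ℝ)
    (f : (Fin (N+p) → Bool) → ℝ) (η : Fin (N+p) → Bool) : ℝ :=
  ∑ j : Fin (p+1),
    r j * (α j * (1 - occ (η (emb N p hN j))) + occ (η (emb N p hN j)) * (1 - α j)) *
      (f (flipCfg η (emb N p hN j)) - f η)

/-- Copying dynamics on the left boundary. -/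
def LC (N p : ℕ) (hN : 1 ≤ N) (cR : Fin (p+1) → Fin (p+1) → ℝ)
    (f : (Fin (N+p) → Bool) → ℝ) (η : Fin (N+p) → Bool) : ℝ :=
  ∑ j : Fin (p+1), ∑ k : Fin (p+1),
    cR j k * (occ (η (emb N p hN k)) * (1 - occ (η (emb N p hN j)))
        + occ (η (emb N p hN j)) * (1 - occ (η (emb N p hN k)))) *
      (f (flipCfg η (emb N p hN j)) - f η)

/-- Anti-copying dynamics on the left boundary. -/
def LA (N p : ℕ) (hN : 1 ≤ N) (aR : Fin (p+1) → Fin (p+1) → ℝ)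
    (f : (Fin (N+p) → Bool) → ℝ) (η : Fin (N+p) → Bool) : ℝ :=
  ∑ j : Fin (p+1), ∑ k : Fin (p+1),
    aR j k * (occ (η (emb N p hN j)) * occ (η (emb N p hN k))
        + (1 - occ (η (emb N p hN j))) * (1 - occ (η (emb N p hN k)))) *
      (f (flipCfg η (emb N p hN j)) - f η)

/-- Stirring between the sites `0` and `1`. -/
def L01 (N p : ℕ) (hN : 2 ≤ N) (f : (Fin (N+p) → Bool) → ℝ) (η : Fin (N+p) → Bool) : ℝ :=
  f (swapCfg η ⟨p, by omega⟩ ⟨p + 1, by omega⟩) - f η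

/-- Symmetric exclusion on the sites `1, …, N-1` (exchanges at `(k, k+1)`,
`1 ≤ k ≤ N-2`). -/
def Lbulk (N p : ℕ) (f : (Fin (N+p) → Bool) → ℝ) (η : Fin (N+p) → Bool) : ℝ :=
  ∑ k : Fin (N-2),
    (f (swapCfg η ⟨k.1 + p + 1, by have := k.isLt; omega⟩
          ⟨k.1 + p + 2, by have := k.isLt; omega⟩) - f η)

/-- Right reservoir at density `β`, acting on the site `N-1`. -/
def Lright (N p : ℕ) (hN : 1 ≤ N) (β : ℝ)
    (f : (Fin (N+p) → Bool) → ℝ) (η : Fin (N+p) → Bool) : ℝ :=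
  (β * (1 - occ (η ⟨N + p - 1, by omega⟩)) + (1 - β) * occ (η ⟨N + p - 1, by omega⟩)) *
    (f (flipCfg η ⟨N + p - 1, by omega⟩) - f η)

/-- The full generator `L_N = L_l + L_{0,1} + L_{b,N} + L_{r,N}` with
`L_l = L_S + L_R + L_C + L_A`. -/
def LN (N p : ℕ) (hN : 2 ≤ N) (r α : Fin (p+1) → ℝ)
    (cR aR : Fin (p+1) → Fin (p+1) → ℝ) (β : ℝ)
    (f : (Fin (N+p) → Bool) → ℝ) (η : Fin (N+p) → Bool) : ℝ :=
  LS N p (by omega) f η + LR N p (by omega) r α f η + LC N p (by omega) cR f η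
    + LA N p (by omega) aR f η + L01 N p hN f η + Lbulk N p f η
    + Lright N p (by omega) β f η
lemma occ_not (b : Bool) : occ (!b) = 1 - occ b := by cases b <;> simp [occ]

lemma occ_flip {m : ℕ} (η : Fin m → Bool) (a s : Fin m) :
    occ (flipCfg η a s) = if s = a then 1 - occ (η a) else occ (η s) := by
  rcases eq_or_ne s a with h | h
  · subst h; simp [flipCfg, occ_not]
  · simp [flipCfg, Function.update_of_ne h, h]

lemma occ_swap {m : ℕ} (η : Fin m → Bool) (a b s : Fin m) :
    occ (swapCfg η a b s)
      = if s = a then occ (η b) else if s = b then occ (η a) else occ (η s) := by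
  unfold swapCfg
  rw [Equiv.swap_apply_def]
  split_ifs <;> rfl

lemma sum_ite_fin {n : ℕ} (j : ℕ) (c : ℝ) :
    ∑ k : Fin n, (if k.1 = j then c else 0) = if j < n then c else 0 := by
  by_cases h : j < n
  · rw [if_pos h, Finset.sum_eq_single (⟨j, h⟩ : Fin n)]
    · simp
    · intro b _ hb
      rw [if_neg]
      intro hc; exact hb (Fin.ext hc)
    · simp
  · rw [if_neg h, Finset.sum_eq_zero]
    intro k _
    rw [if_neg]
    have := k.isLt; omega

lemma sum_ite_fin' {n : ℕ} (t j : ℕ) (c : ℝ) :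
    ∑ k : Fin n, (if k.1 + t = j then c else 0) = if t ≤ j ∧ j - t < n then c else 0 := by
  by_cases h : t ≤ j ∧ j - t < n
  · rw [if_pos h, Finset.sum_eq_single (⟨j - t, h.2⟩ : Fin n)]
    · rw [if_pos (show (⟨j - t, h.2⟩ : Fin n).1 + t = j by show j - t + t = j; omega)]
    · intro b _ hb
      rw [if_neg]
      intro hc; exact hb (Fin.ext (show b.1 = j - t by omega))
    · simp
  · rw [if_neg h, Finset.sum_eq_zero]
    intro k _
    rw [if_neg]
    have := k.isLt; omega
lemma LN_occ (N p : ℕ) (hN : 2 ≤ N) (r α : Fin (p+1) → ℝ)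
    (cR aR : Fin (p+1) → Fin (p+1) → ℝ) (β : ℝ)
    (m : ℕ) (hm1 : 1 ≤ m) (hm2 : m < N) (η : Fin (N+p) → Bool) :
    LN N p hN r α cR aR β (fun η => occ (η ⟨m+p, Nat.add_lt_add_right hm2 p⟩)) η
      = (occ (η ⟨m-1+p, by omega⟩) - occ (η ⟨m+p, Nat.add_lt_add_right hm2 p⟩))
        + ((if h : m+1 < N then occ (η ⟨m+1+p, by omega⟩) else β)
            - occ (η ⟨m+p, Nat.add_lt_add_right hm2 p⟩)) := by
  have hLS : LS N p (by omega) (fun η => occ (η ⟨m+p, Nat.add_lt_add_right hm2 p⟩)) η = 0 := by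
    apply Finset.sum_eq_zero; intro i _
    simp only [occ_swap]
    rw [if_neg (by simp only [Fin.ext_iff]; have := i.isLt; omega),
        if_neg (by simp only [Fin.ext_iff]; have := i.isLt; omega), sub_self]
  have hflip : ∀ j : Fin (p+1),
      occ (flipCfg η (emb N p (by omega) j) ⟨m+p, Nat.add_lt_add_right hm2 p⟩) - occ (η ⟨m+p, Nat.add_lt_add_right hm2 p⟩) = 0 := by
    intro j
    rw [occ_flip, if_neg (by simp only [emb, Fin.ext_iff]; have := j.isLt; omega), sub_self]
  have hLR : LR N p (by omega) r α (fun η => occ (η ⟨m+p, Nat.add_lt_add_right hm2 p⟩)) η = 0 := by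
    apply Finset.sum_eq_zero; intro j _
    simp only [hflip j, mul_zero]
  have hLC : LC N p (by omega) cR (fun η => occ (η ⟨m+p, Nat.add_lt_add_right hm2 p⟩)) η = 0 := by
    apply Finset.sum_eq_zero; intro j _
    apply Finset.sum_eq_zero; intro k _
    simp only [hflip j, mul_zero]
  have hLA : LA N p (by omega) aR (fun η => occ (η ⟨m+p, Nat.add_lt_add_right hm2 p⟩)) η = 0 := by
    apply Finset.sum_eq_zero; intro j _
    apply Finset.sum_eq_zero; intro k _
    simp only [hflip j, mul_zero]
  obtain ⟨x, hx⟩ : ∃ x : ℕ → ℝ, ∀ (i : ℕ) (h : i < N+p), occ (η ⟨i, h⟩) = x i :=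
    ⟨fun i => if h : i < N+p then occ (η ⟨i, h⟩) else 0, fun i h => by simp only [dif_pos h]⟩
  have hL01 : L01 N p hN (fun η => occ (η ⟨m+p, Nat.add_lt_add_right hm2 p⟩)) η
      = if m = 1 then x (m-1+p) - x (m+p) else 0 := by
    simp only [L01, occ_swap, Fin.mk.injEq, hx]
    by_cases hm : m = 1
    · rw [if_neg (show ¬m + p = p by omega), if_pos (show m + p = p + 1 by omega),
        if_pos hm, show m - 1 + p = p from by omega]
    · rw [if_neg (show ¬m + p = p by omega), if_neg (show ¬m + p = p + 1 by omega),
        if_neg hm, sub_self]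
  have hLbulk : Lbulk N p (fun η => occ (η ⟨m+p, Nat.add_lt_add_right hm2 p⟩)) η
      = (if 2 ≤ m ∧ m - 2 < N-2 then x (m-1+p) - x (m+p) else 0)
        + (if 1 ≤ m ∧ m - 1 < N-2 then x (min (m+1) (N-1) + p) - x (m+p) else 0) := by
    rw [← sum_ite_fin' (n := N-2) 2 m (x (m-1+p) - x (m+p)),
        ← sum_ite_fin' (n := N-2) 1 m (x (min (m+1) (N-1) + p) - x (m+p)),
        ← Finset.sum_add_distrib]
    apply Finset.sum_congr rfl
    intro k _
    have hk := k.isLt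
    simp only [occ_swap, Fin.mk.injEq, hx]
    by_cases ha : k.1 + 1 = m
    · rw [if_pos (show m + p = k.1 + p + 1 by omega), if_neg (show ¬k.1 + 2 = m by omega),
        if_pos ha, zero_add, show k.1 + p + 2 = min (m+1) (N-1) + p from by omega]
    · by_cases hb : k.1 + 2 = m
      · rw [if_neg (show ¬m + p = k.1 + p + 1 by omega),
          if_pos (show m + p = k.1 + p + 2 by omega), if_pos hb, if_neg ha, add_zero,
          show k.1 + p + 1 = m - 1 + p from by omega]
      · rw [if_neg (show ¬m + p = k.1 + p + 1 by omega),
          if_neg (show ¬m + p = k.1 + p + 2 by omega), if_neg hb, if_neg ha, sub_self, add_zero]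
  have hsqx : x (m+p) * x (m+p) = x (m+p) := by
    rw [← hx (m+p) (by omega)]
    cases η (⟨m+p, Nat.add_lt_add_right hm2 p⟩ : Fin (N+p)) <;> simp [occ]
  have hLright : Lright N p (by omega) β (fun η => occ (η ⟨m+p, Nat.add_lt_add_right hm2 p⟩)) η
      = if m + 1 < N then 0 else β - x (m+p) := by
    by_cases hc : m + 1 < N
    · rw [if_pos hc]
      simp only [Lright, occ_flip]
      rw [if_neg (by simp only [Fin.ext_iff]; omega), sub_self, mul_zero]
    · rw [if_neg hc]
      have he' : (⟨m+p, Nat.add_lt_add_right hm2 p⟩ : Fin (N+p)) = ⟨N + p - 1, by omega⟩ :=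
        Fin.ext (show m + p = N + p - 1 by omega)
      simp only [Lright, occ_flip]
      rw [if_pos he']
      simp only [hx]
      rw [show N + p - 1 = m + p from by omega]
      linear_combination (4*β - 2) * hsqx
  have hd : (if h : m+1 < N then occ (η ⟨m+1+p, by omega⟩) else β)
      = if m+1 < N then x (m+1+p) else β := by
    by_cases hc : m + 1 < N
    · rw [dif_pos hc, if_pos hc, hx]
    · rw [dif_neg hc, if_neg hc]
  rw [LN, hLS, hLR, hLC, hLA, hL01, hLbulk, hLright, hd,
      hx (m-1+p) (by omega), hx (m+p) (by omega)]
  by_cases hc : m + 1 < N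
  · have hmin : min (m+1) (N-1) + p = m+1+p := by omega
    rw [hmin]
    split_ifs <;> first | omega | ring
  · split_ifs <;> first | omega | ring

/-- under the stationary state, the density profile is linear:
`ρ_N(k) = (k/N) β + ((N−k)/N) ρ_N(0)` for `0 ≤ k < N`. -/
theorem stmt6 (N p : ℕ) (hN : 2 ≤ N) (β : ℝ) (hβ0 : 0 < β) (hβ1 : β < 1)
    (r α : Fin (p+1) → ℝ) (cR aR : Fin (p+1) → Fin (p+1) → ℝ)
    (hr : ∀ j, 0 ≤ r j) (hα0 : ∀ j, 0 ≤ α j) (hα1 : ∀ j, α j ≤ 1)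
    (hc : ∀ j k, 0 ≤ cR j k) (ha : ∀ j k, 0 ≤ aR j k)
    (hcd : ∀ j, cR j j = 0) (had : ∀ j, aR j j = 0)
    (hpos : 0 < (∑ j, r j) + ∑ j, ∑ k, aR j k)
    (μ : (Fin (N+p) → Bool) → ℝ) (hμ : IsStationaryState (LN N p hN r α cR aR β) μ) :
    ∀ (k : ℕ) (hk : k < N),
      expVal μ (fun η => occ (η ⟨k + p, by omega⟩))
        = (k : ℝ) / N * β
          + ((N : ℝ) - k) / N * expVal μ (fun η => occ (η ⟨p, by omega⟩)) := by
  obtain ⟨hμ0, hμ1, hμs⟩ := hμ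
  set Of : ℕ → (Fin (N+p) → Bool) → ℝ :=
    fun i η => if h : i < N+p then occ (η ⟨i, h⟩) else 0 with hOf
  have hOfeq : ∀ (i : ℕ) (h : i < N+p) (η : Fin (N+p) → Bool), occ (η ⟨i, h⟩) = Of i η :=
    fun i h η => by simp only [hOf]; rw [dif_pos h]
  have hexp : ∀ (i : ℕ) (h : i < N+p),
      expVal μ (fun η => occ (η ⟨i, h⟩)) = expVal μ (Of i) := fun i h => by
    unfold expVal
    exact Finset.sum_congr rfl fun η _ => by simp only [hOfeq]
  set ρ : ℕ → ℝ := fun k => if k < N then expVal μ (Of (k+p)) else β with hρdef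
  have hρlt : ∀ k, k < N → ρ k = expVal μ (Of (k+p)) := fun k h => by
    simp only [hρdef]; rw [if_pos h]
  have hρN : ρ N = β := by simp only [hρdef]; rw [if_neg (lt_irrefl N)]
  have hrec : ∀ m, 1 ≤ m → m < N → ρ (m-1) + ρ (m+1) = 2 * ρ m := by
    intro m h1 h2
    have hconst : ∑ η : Fin (N+p) → Bool, μ η * β = β := by
      rw [← Finset.sum_mul, hμ1, one_mul]
    by_cases hcn : m + 1 < N
    · have h0 : ∑ η : Fin (N+p) → Bool,
          μ η * ((Of (m-1+p) η - Of (m+p) η) + (Of (m+1+p) η - Of (m+p) η)) = 0 := by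
        rw [← hμs (fun η => occ (η ⟨m+p, by omega⟩))]
        refine Finset.sum_congr rfl fun η _ => ?_
        rw [LN_occ N p hN r α cR aR β m h1 h2 η, dif_pos hcn]
        simp only [hOfeq]
      have hsum : expVal μ (Of (m-1+p)) - expVal μ (Of (m+p))
          + (expVal μ (Of (m+1+p)) - expVal μ (Of (m+p))) = 0 := by
        have h3 := h0
        rw [Finset.sum_congr rfl (fun η _ =>
          show μ η * (Of (m-1+p) η - Of (m+p) η + (Of (m+1+p) η - Of (m+p) η))
              = (μ η * Of (m-1+p) η - μ η * Of (m+p) η)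
                + (μ η * Of (m+1+p) η - μ η * Of (m+p) η) from by ring),
          Finset.sum_add_distrib, Finset.sum_sub_distrib, Finset.sum_sub_distrib] at h3
        simpa only [expVal] using h3
      rw [hρlt (m-1) (by omega), hρlt (m+1) (by omega), hρlt m h2,
        show m - 1 + p = m-1+p from rfl]
      linarith
    · have h0 : ∑ η : Fin (N+p) → Bool,
          μ η * ((Of (m-1+p) η - Of (m+p) η) + (β - Of (m+p) η)) = 0 := by
        rw [← hμs (fun η => occ (η ⟨m+p, by omega⟩))]
        refine Finset.sum_congr rfl fun η _ => ?_
        rw [LN_occ N p hN r α cR aR β m h1 h2 η, dif_neg hcn]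
        simp only [hOfeq]
      have hsum : expVal μ (Of (m-1+p)) - expVal μ (Of (m+p))
          + (β - expVal μ (Of (m+p))) = 0 := by
        have h3 := h0
        rw [Finset.sum_congr rfl (fun η _ =>
          show μ η * (Of (m-1+p) η - Of (m+p) η + (β - Of (m+p) η))
              = (μ η * Of (m-1+p) η - μ η * Of (m+p) η)
                + (μ η * β - μ η * Of (m+p) η) from by ring),
          Finset.sum_add_distrib, Finset.sum_sub_distrib, Finset.sum_sub_distrib,
          hconst] at h3
        simpa only [expVal] using h3
      have hm1N : m + 1 = N := by omega
      rw [hρlt (m-1) (by omega), hρlt m h2, hm1N, hρN]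
      linarith
  have hgap : ∀ k, k ≤ N → ρ k = ρ 0 + k * (ρ 1 - ρ 0) := by
    intro k
    induction k using Nat.strong_induction_on with
    | _ k ih =>
      intro hk
      match k with
      | 0 => simp
      | 1 => push_cast; ring
      | (k+2) =>
        have h1 := hrec (k+1) (by omega) (by omega)
        have e1 := ih (k+1) (by omega) (by omega)
        have e2 := ih k (by omega) (by omega)
        rw [show k+1-1 = k from by omega] at h1
        rw [show k+1+1 = k+2 from rfl] at h1
        push_cast at e1 e2 ⊢
        linarith
  have hβN : β = ρ 0 + N * (ρ 1 - ρ 0) := by rw [← hρN]; exact hgap N le_rfl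
  have hN0 : (N:ℝ) ≠ 0 := by
    have : (0:ℝ) < N := by exact_mod_cast (by omega : 0 < N)
    linarith
  intro k hk
  have hρ0 : ρ 0 = expVal μ (fun η => occ (η ⟨p, by omega⟩)) := by
    rw [hρlt 0 (by omega), Nat.zero_add, hexp p (by omega)]
  calc expVal μ (fun η => occ (η ⟨k + p, by omega⟩))
      = expVal μ (Of (k+p)) := hexp (k+p) (by omega)
    _ = ρ k := (hρlt k hk).symm
    _ = ρ 0 + k * (ρ 1 - ρ 0) := hgap k hk.le
    _ = (k : ℝ) / N * β + ((N : ℝ) - k) / N * ρ 0 := by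
        rw [hβN]
        field_simp
        ring
    _ = (k : ℝ) / N * β
          + ((N : ℝ) - k) / N * expVal μ (fun η => occ (η ⟨p, by omega⟩)) := by rw [hρ0]
end

section
/- Suppose Σ_{j∈Λ*_p} r_j + Σ_{j,k∈Λ*_p} a_{j,k} > 0. Let ρ: Λ*_p → ℝ be the unique solution of the system (*), and for each N ≥ 2 let μ_N be the unique stationary state of L_N with ρ_N(k) = E_{μ_N}[η_k]. Then there exists a finite constant C₀, independent of N, such that |ρ_N(k) − ρ(k)| ≤ C₀/N for all −p ≤ k ≤ 0 and all N. -/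
open Finset Filter Topology

/-- A stationary state of a generator `L` on a finite set `S`. -/
def IsStationaryGen {S : Type*} [Fintype S] (L : (S → ℝ) → S → ℝ) (μ : S → ℝ) : Prop :=
  (∀ x, 0 ≤ μ x) ∧ (∑ x, μ x = 1) ∧ ∀ f : S → ℝ, ∑ x, μ x * L f x = 0

/- The sites of `Λ*_p = {-p, …, 0}` are indexed by `Fin (p+1)`, the index `i`
corresponding to the site `i - p`.  (For the discrete Laplacian `𝒯` to make
sense, `Λ*_p` must contain at least two sites, i.e. `1 ≤ p`.) -/

/-- `(𝒞ρ)(j) = Σ_k c_{j,k} [ρ(k) − ρ(j)]`. -/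
def CSum (p : ℕ) (cR : Fin (p+1) → Fin (p+1) → ℝ) (ρ : Fin (p+1) → ℝ)
    (j : Fin (p+1)) : ℝ :=
  ∑ k : Fin (p+1), cR j k * (ρ k - ρ j)

/-- `(𝒜ρ)(j) = Σ_k a_{j,k} [1 − ρ(k) − ρ(j)]`. -/
def ASum (p : ℕ) (aR : Fin (p+1) → Fin (p+1) → ℝ) (ρ : Fin (p+1) → ℝ)
    (j : Fin (p+1)) : ℝ :=
  ∑ k : Fin (p+1), aR j k * (1 - ρ k - ρ j)

/-- `(𝒯ρ)(j)`: Neumann discrete Laplacian on `Λ*_p` (index `0` is site `-p`,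
index `p` is site `0`). -/
def TSum (p : ℕ) (hp : 1 ≤ p) (ρ : Fin (p+1) → ℝ) (j : Fin (p+1)) : ℝ :=
  if j.1 = 0 then ρ ⟨1, by omega⟩ - ρ ⟨0, by omega⟩
  else if h : j.1 = p then ρ ⟨p - 1, by omega⟩ - ρ ⟨p, by omega⟩
  else ρ ⟨j.1 + 1, by have := j.isLt; omega⟩ + ρ ⟨j.1 - 1, by omega⟩ - 2 * ρ j

lemma occ_nonneg (b : Bool) : 0 ≤ occ b := by cases b <;> simp [occ]
lemma occ_le_one (b : Bool) : occ b ≤ 1 := by cases b <;> simp [occ]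
lemma swap_occ {m : ℕ} (η : Fin m → Bool) (a b i : Fin m) :
    occ (swapCfg η a b i) = if i = a then occ (η b) else if i = b then occ (η a) else occ (η i) := by
  simp only [swapCfg, Equiv.swap_apply_def]
  split_ifs <;> rfl

lemma flip_occ {m : ℕ} (η : Fin m → Bool) (a i : Fin m) :
    occ (flipCfg η a i) = if i = a then 1 - occ (η a) else occ (η i) := by
  simp only [flipCfg, Function.update_apply]
  split_ifs with h
  · subst h; rw [occ_not]
  · rfl

lemma sum_ite_val {n q : ℕ} (i : Fin q) (c : ℕ) (F : Fin n → ℝ)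
    (φ : Fin n → Fin q) (hφ : ∀ m, (φ m).1 = m.1 + c) :
    (∑ m : Fin n, if i = φ m then F m else 0) =
      if h : c ≤ i.1 ∧ i.1 - c < n then F ⟨i.1 - c, h.2⟩ else 0 := by
  split_ifs with h
  · rw [Finset.sum_eq_single (⟨i.1 - c, h.2⟩ : Fin n)]
    · rw [if_pos (Fin.ext (by rw [hφ]; simp; omega))]
    · intro b _ hb
      rw [if_neg]
      intro he
      apply hb
      apply Fin.ext
      have hb' := hφ b
      have : i.1 = (φ b).1 := by rw [he]
      simp
      omega
    · simp
  · apply Finset.sum_eq_zero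
    intro m _
    rw [if_neg]
    intro he
    apply h
    have := hφ m
    have : i.1 = (φ m).1 := by rw [he]
    constructor <;> omega

lemma LS_apply (N p : ℕ) (hN : 1 ≤ N) (i : Fin (N+p)) (η : Fin (N+p) → Bool) :
    LS N p hN (fun ζ => occ (ζ i)) η =
      (if h1 : i.1 < p then occ (η ⟨i.1+1, by omega⟩) - occ (η i) else 0)
      + (if h2 : 1 ≤ i.1 ∧ i.1 ≤ p then occ (η ⟨i.1-1, by omega⟩) - occ (η i) else 0) := by
  unfold LS
  have key : ∀ m : Fin p,
      occ (swapCfg η ⟨m.1, by have := m.isLt; omega⟩ ⟨m.1 + 1, by have := m.isLt; omega⟩ i)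
        - occ (η i)
      = (if i = (⟨m.1, by have := m.isLt; omega⟩ : Fin (N+p)) then
           occ (η ⟨m.1+1, by have := m.isLt; omega⟩) - occ (η i) else 0)
        + (if i = (⟨m.1+1, by have := m.isLt; omega⟩ : Fin (N+p)) then
           occ (η ⟨m.1, by have := m.isLt; omega⟩) - occ (η i) else 0) := by
    intro m
    rw [swap_occ]
    by_cases h1 : i = (⟨m.1, by have := m.isLt; omega⟩ : Fin (N+p)) <;>
      by_cases h2 : i = (⟨m.1+1, by have := m.isLt; omega⟩ : Fin (N+p))
    · exfalso
      have := congrArg Fin.val (h1.symm.trans h2)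
      simp at this
    · simp [h1, h2]
    · simp [h1, h2]
    · simp [h1, h2]
  simp only [key]
  rw [Finset.sum_add_distrib]
  rw [sum_ite_val i 0 _ (fun m => (⟨m.1, by have := m.isLt; omega⟩ : Fin (N+p)))
        (fun m => rfl),
      sum_ite_val i 1 _ (fun m => (⟨m.1 + 1, by have := m.isLt; omega⟩ : Fin (N+p)))
        (fun m => rfl)]
  congr 1
  · by_cases h1 : i.1 < p
    · rw [dif_pos ⟨Nat.zero_le _, by omega⟩, dif_pos h1]
      congr 3
    · rw [dif_neg (by omega), dif_neg h1]
  · by_cases h2 : 1 ≤ i.1 ∧ i.1 ≤ p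
    · rw [dif_pos ⟨h2.1, by omega⟩, dif_pos h2]
    · rw [dif_neg (by omega), dif_neg h2]
lemma idR (c A : ℝ) (b : Bool) :
    c * (A * (1 - occ b) + occ b * (1 - A)) * ((1 - occ b) - occ b) = c * (A - occ b) := by
  cases b <;> simp [occ] <;> ring

lemma idRight (A : ℝ) (b : Bool) :
    (A * (1 - occ b) + (1 - A) * occ b) * ((1 - occ b) - occ b) = A - occ b := by
  cases b <;> simp [occ]

lemma Lbulk_apply (N p : ℕ) (i : Fin (N+p)) (η : Fin (N+p) → Bool) :
    Lbulk N p (fun ζ => occ (ζ i)) η =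
      (if h1 : p+1 ≤ i.1 ∧ i.1 < N+p-1 then occ (η ⟨i.1+1, by omega⟩) - occ (η i) else 0)
      + (if h2 : p+2 ≤ i.1 then occ (η ⟨i.1-1, by omega⟩) - occ (η i) else 0) := by
  unfold Lbulk
  have key : ∀ m : Fin (N-2),
      occ (swapCfg η ⟨m.1 + p + 1, by have := m.isLt; omega⟩
            ⟨m.1 + p + 2, by have := m.isLt; omega⟩ i) - occ (η i)
      = (if i = (⟨m.1 + p + 1, by have := m.isLt; omega⟩ : Fin (N+p)) then
           occ (η ⟨m.1 + p + 2, by have := m.isLt; omega⟩) - occ (η i) else 0)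
        + (if i = (⟨m.1 + p + 2, by have := m.isLt; omega⟩ : Fin (N+p)) then
           occ (η ⟨m.1 + p + 1, by have := m.isLt; omega⟩) - occ (η i) else 0) := by
    intro m
    rw [swap_occ]
    by_cases h1 : i = (⟨m.1 + p + 1, by have := m.isLt; omega⟩ : Fin (N+p)) <;>
      by_cases h2 : i = (⟨m.1 + p + 2, by have := m.isLt; omega⟩ : Fin (N+p))
    · exact absurd (congrArg Fin.val (h1.symm.trans h2)) (by simp)
    · simp [h1, h2]
    · simp [h1, h2]
    · simp [h1, h2]
  simp only [key]
  rw [Finset.sum_add_distrib]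
  rw [sum_ite_val i (p+1) _ (fun m => (⟨m.1 + p + 1, by have := m.isLt; omega⟩ : Fin (N+p)))
        (fun m => rfl),
      sum_ite_val i (p+2) _ (fun m => (⟨m.1 + p + 2, by have := m.isLt; omega⟩ : Fin (N+p)))
        (fun m => rfl)]
  congr 1
  · by_cases h1 : p+1 ≤ i.1 ∧ i.1 < N+p-1
    · rw [dif_pos (show p+1 ≤ i.1 ∧ i.1 - (p+1) < N-2 by omega), dif_pos h1]
      have e1 : (⟨(⟨i.1 - (p+1), by omega⟩ : Fin (N-2)).1 + p + 2, by simp; omega⟩ : Fin (N+p))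
          = ⟨i.1+1, by omega⟩ := Fin.ext (by simp; omega)
      rw [e1]
    · rw [dif_neg (by omega), dif_neg h1]
  · by_cases h2 : p+2 ≤ i.1
    · rw [dif_pos (show p+2 ≤ i.1 ∧ i.1 - (p+2) < N-2 from ⟨h2, by have := i.isLt; omega⟩),
        dif_pos h2]
      have e2 : (⟨(⟨i.1 - (p+2), by have := i.isLt; omega⟩ : Fin (N-2)).1 + p + 1,
            by simp; have := i.isLt; omega⟩ : Fin (N+p))
          = ⟨i.1-1, by have := i.isLt; omega⟩ := Fin.ext (by simp; omega)
      rw [e2]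
    · rw [dif_neg (by omega), dif_neg h2]

lemma L01_apply (N p : ℕ) (hN : 2 ≤ N) (i : Fin (N+p)) (η : Fin (N+p) → Bool) :
    L01 N p hN (fun ζ => occ (ζ i)) η =
      (if i.1 = p then occ (η ⟨p+1, by omega⟩) - occ (η i) else 0)
      + (if i.1 = p+1 then occ (η ⟨p, by omega⟩) - occ (η i) else 0) := by
  unfold L01
  simp only [swap_occ]
  by_cases h1 : i = (⟨p, by omega⟩ : Fin (N+p)) <;>
    by_cases h2 : i = (⟨p+1, by omega⟩ : Fin (N+p))
  · exact absurd (congrArg Fin.val (h1.symm.trans h2)) (by simp)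
  · rw [if_pos h1, if_pos (show i.1 = p from by rw [h1]),
      if_neg (show ¬ i.1 = p+1 from fun e => h2 (Fin.ext e))]
    rw [h1]
    ring
  · rw [if_neg h1, if_pos h2, if_neg (show ¬ i.1 = p from fun e => h1 (Fin.ext e)),
      if_pos (show i.1 = p+1 from by rw [h2])]
    rw [h2]
    ring
  · rw [if_neg h1, if_neg h2, if_neg (show ¬ i.1 = p from fun e => h1 (Fin.ext e)),
      if_neg (show ¬ i.1 = p+1 from fun e => h2 (Fin.ext e))]
    ring

lemma LR_apply (N p : ℕ) (hN : 1 ≤ N) (r α : Fin (p+1) → ℝ) (i : Fin (N+p))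
    (η : Fin (N+p) → Bool) :
    LR N p hN r α (fun ζ => occ (ζ i)) η =
      if h : i.1 ≤ p then r ⟨i.1, by omega⟩ * (α ⟨i.1, by omega⟩ - occ (η i)) else 0 := by
  unfold LR
  have key : ∀ j : Fin (p+1),
      r j * (α j * (1 - occ (η (emb N p hN j))) + occ (η (emb N p hN j)) * (1 - α j)) *
        (occ (flipCfg η (emb N p hN j) i) - occ (η i))
      = if i = emb N p hN j then r j * (α j - occ (η i)) else 0 := by
    intro j
    rw [flip_occ]
    by_cases h : i = emb N p hN j
    · rw [if_pos h, if_pos h, ← h, idR]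
    · rw [if_neg h, if_neg h]
      simp
  simp only [key]
  rw [sum_ite_val i 0 _ (emb N p hN) (fun m => rfl)]
  by_cases h : i.1 ≤ p
  · rw [dif_pos ⟨Nat.zero_le _, by omega⟩, dif_pos h]
    rfl
  · rw [dif_neg (by omega), dif_neg h]

lemma Lright_apply (N p : ℕ) (hN : 1 ≤ N) (β : ℝ) (i : Fin (N+p)) (η : Fin (N+p) → Bool) :
    Lright N p hN β (fun ζ => occ (ζ i)) η =
      if i.1 = N+p-1 then β - occ (η i) else 0 := by
  unfold Lright
  simp only [flip_occ]
  by_cases h : i = (⟨N + p - 1, by omega⟩ : Fin (N+p))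
  · rw [if_pos h, if_pos (show i.1 = N+p-1 from by rw [h]), h, idRight]
  · rw [if_neg h, if_neg (show ¬ i.1 = N+p-1 from fun e => h (Fin.ext e))]
    ring
lemma idC (c : ℝ) (b b' : Bool) :
    c * (occ b' * (1 - occ b) + occ b * (1 - occ b')) * ((1 - occ b) - occ b)
      = c * (occ b' - occ b) := by
  cases b <;> cases b' <;> simp [occ] <;> ring

lemma idA (c : ℝ) (b b' : Bool) :
    c * (occ b * occ b' + (1 - occ b) * (1 - occ b')) * ((1 - occ b) - occ b)
      = c * (1 - occ b - occ b') := by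
  cases b <;> cases b' <;> simp [occ] <;> ring

lemma LC_apply (N p : ℕ) (hN : 1 ≤ N) (cR : Fin (p+1) → Fin (p+1) → ℝ) (i : Fin (N+p))
    (η : Fin (N+p) → Bool) :
    LC N p hN cR (fun ζ => occ (ζ i)) η =
      if h : i.1 ≤ p then
        ∑ k : Fin (p+1), cR ⟨i.1, by omega⟩ k * (occ (η (emb N p hN k)) - occ (η i))
      else 0 := by
  unfold LC
  have key : ∀ j : Fin (p+1),
      (∑ k : Fin (p+1),
        cR j k * (occ (η (emb N p hN k)) * (1 - occ (η (emb N p hN j)))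
            + occ (η (emb N p hN j)) * (1 - occ (η (emb N p hN k)))) *
          (occ (flipCfg η (emb N p hN j) i) - occ (η i)))
      = if i = emb N p hN j then
          ∑ k : Fin (p+1), cR j k * (occ (η (emb N p hN k)) - occ (η i)) else 0 := by
    intro j
    by_cases h : i = emb N p hN j
    · rw [if_pos h]
      apply Finset.sum_congr rfl
      intro k _
      rw [flip_occ, if_pos h, ← h, idC]
    · rw [if_neg h]
      apply Finset.sum_eq_zero
      intro k _
      rw [flip_occ, if_neg h]
      ring
  simp only [flip_occ] at key ⊢
  simp only [key]
  rw [sum_ite_val i 0 _ (emb N p hN) (fun m => rfl)]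
  by_cases h : i.1 ≤ p
  · rw [dif_pos ⟨Nat.zero_le _, by omega⟩, dif_pos h]
    rfl
  · rw [dif_neg (by omega), dif_neg h]

lemma LA_apply (N p : ℕ) (hN : 1 ≤ N) (aR : Fin (p+1) → Fin (p+1) → ℝ) (i : Fin (N+p))
    (η : Fin (N+p) → Bool) :
    LA N p hN aR (fun ζ => occ (ζ i)) η =
      if h : i.1 ≤ p then
        ∑ k : Fin (p+1), aR ⟨i.1, by omega⟩ k * (1 - occ (η i) - occ (η (emb N p hN k)))
      else 0 := by
  unfold LA
  have key : ∀ j : Fin (p+1),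
      (∑ k : Fin (p+1),
        aR j k * (occ (η (emb N p hN j)) * occ (η (emb N p hN k))
            + (1 - occ (η (emb N p hN j))) * (1 - occ (η (emb N p hN k)))) *
          (occ (flipCfg η (emb N p hN j) i) - occ (η i)))
      = if i = emb N p hN j then
          ∑ k : Fin (p+1), aR j k * (1 - occ (η i) - occ (η (emb N p hN k))) else 0 := by
    intro j
    by_cases h : i = emb N p hN j
    · rw [if_pos h]
      apply Finset.sum_congr rfl
      intro k _
      rw [flip_occ, if_pos h, ← h, idA]
    · rw [if_neg h]
      apply Finset.sum_eq_zero
      intro k _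
      rw [flip_occ, if_neg h]
      ring
  simp only [flip_occ] at key ⊢
  simp only [key]
  rw [sum_ite_val i 0 _ (emb N p hN) (fun m => rfl)]
  by_cases h : i.1 ≤ p
  · rw [dif_pos ⟨Nat.zero_le _, by omega⟩, dif_pos h]
    rfl
  · rw [dif_neg (by omega), dif_neg h]
/-- Mean occupation at a site. -/
def rhoN {m : ℕ} (μ : (Fin m → Bool) → ℝ) (i : Fin m) : ℝ := ∑ η, μ η * occ (η i)

lemma rhoN_nonneg {m : ℕ} (μ : (Fin m → Bool) → ℝ) (hμ : ∀ x, 0 ≤ μ x) (i : Fin m) :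
    0 ≤ rhoN μ i :=
  Finset.sum_nonneg fun η _ => mul_nonneg (hμ η) (occ_nonneg _)

lemma rhoN_le_one {m : ℕ} (μ : (Fin m → Bool) → ℝ) (hμ : ∀ x, 0 ≤ μ x)
    (hs : ∑ η, μ η = 1) (i : Fin m) : rhoN μ i ≤ 1 := by
  rw [← hs]
  apply Finset.sum_le_sum
  intro η _
  calc μ η * occ (η i) ≤ μ η * 1 := mul_le_mul_of_nonneg_left (occ_le_one _) (hμ η)
  _ = μ η := mul_one _

lemma exp_occ_sub {m : ℕ} (μ : (Fin m → Bool) → ℝ) (a b : Fin m) :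
    ∑ η, μ η * (occ (η a) - occ (η b)) = rhoN μ a - rhoN μ b := by
  simp [rhoN, mul_sub, Finset.sum_sub_distrib]

lemma exp_ite {m : ℕ} (μ : (Fin m → Bool) → ℝ) (c : Prop) [Decidable c] (a b : Fin m) :
    ∑ η, μ η * (if c then occ (η a) - occ (η b) else 0)
      = if c then rhoN μ a - rhoN μ b else 0 := by
  split_ifs with h
  · exact exp_occ_sub μ a b
  · simp

lemma exp_c_sub {m : ℕ} (μ : (Fin m → Bool) → ℝ) (hs : ∑ η, μ η = 1) (c A : ℝ) (a : Fin m) :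
    ∑ η, μ η * (c * (A - occ (η a))) = c * (A - rhoN μ a) := by
  have : ∀ η ∈ (Finset.univ : Finset (Fin m → Bool)),
      μ η * (c * (A - occ (η a))) = c * A * μ η - c * (μ η * occ (η a)) :=
    fun η _ => by ring
  rw [Finset.sum_congr rfl this, Finset.sum_sub_distrib, ← Finset.mul_sum, ← Finset.mul_sum,
    hs]
  simp only [rhoN]
  ring

lemma exp_one_sub_sub {m : ℕ} (μ : (Fin m → Bool) → ℝ) (hs : ∑ η, μ η = 1) (c : ℝ)
    (a b : Fin m) :
    ∑ η, μ η * (c * (1 - occ (η a) - occ (η b))) = c * (1 - rhoN μ a - rhoN μ b) := by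
  have : ∀ η ∈ (Finset.univ : Finset (Fin m → Bool)),
      μ η * (c * (1 - occ (η a) - occ (η b)))
        = c * μ η - (c * (μ η * occ (η a)) + c * (μ η * occ (η b))) :=
    fun η _ => by ring
  rw [Finset.sum_congr rfl this, Finset.sum_sub_distrib, Finset.sum_add_distrib,
    ← Finset.mul_sum, ← Finset.mul_sum, ← Finset.mul_sum, hs]
  simp only [rhoN]
  ring

lemma exp_csum {m n : ℕ} (μ : (Fin m → Bool) → ℝ) (w : Fin n → ℝ) (g : Fin n → Fin m)
    (i : Fin m) :
    ∑ η, μ η * (∑ k, w k * (occ (η (g k)) - occ (η i)))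
      = ∑ k, w k * (rhoN μ (g k) - rhoN μ i) := by
  have : ∀ η ∈ (Finset.univ : Finset (Fin m → Bool)),
      μ η * (∑ k, w k * (occ (η (g k)) - occ (η i)))
        = ∑ k, w k * (μ η * (occ (η (g k)) - occ (η i))) := by
    intro η _
    rw [Finset.mul_sum]
    exact Finset.sum_congr rfl fun k _ => by ring
  rw [Finset.sum_congr rfl this, Finset.sum_comm]
  apply Finset.sum_congr rfl
  intro k _
  rw [← Finset.mul_sum, exp_occ_sub]

lemma exp_asum {m n : ℕ} (μ : (Fin m → Bool) → ℝ) (hs : ∑ η, μ η = 1) (w : Fin n → ℝ)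
    (g : Fin n → Fin m) (i : Fin m) :
    ∑ η, μ η * (∑ k, w k * (1 - occ (η i) - occ (η (g k))))
      = ∑ k, w k * (1 - rhoN μ i - rhoN μ (g k)) := by
  have : ∀ η ∈ (Finset.univ : Finset (Fin m → Bool)),
      μ η * (∑ k, w k * (1 - occ (η i) - occ (η (g k))))
        = ∑ k, μ η * (w k * (1 - occ (η i) - occ (η (g k)))) := by
    intro η _
    rw [Finset.mul_sum]
  rw [Finset.sum_congr rfl this, Finset.sum_comm]
  exact Finset.sum_congr rfl fun k _ => exp_one_sub_sub μ hs (w k) i (g k)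
lemma EqBulk (N p : ℕ) (hN : 2 ≤ N) (r α : Fin (p+1) → ℝ)
    (cR aR : Fin (p+1) → Fin (p+1) → ℝ) (β : ℝ) (μ : (Fin (N+p) → Bool) → ℝ)
    (hμ : IsStationaryGen (LN N p hN r α cR aR β) μ) (q : ℕ) (h1 : p+1 ≤ q) (h2 : q ≤ N+p-2) :
    0 = (rhoN μ ⟨q+1, by omega⟩ - rhoN μ ⟨q, by omega⟩)
      + (rhoN μ ⟨q-1, by omega⟩ - rhoN μ ⟨q, by omega⟩) := by
  have hq : q < N+p := by omega
  have key : ∀ η : Fin (N+p) → Bool,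
      LN N p hN r α cR aR β (fun ζ => occ (ζ ⟨q, hq⟩)) η
      = (occ (η ⟨q+1, by omega⟩) - occ (η ⟨q, hq⟩))
        + (occ (η ⟨q-1, by omega⟩) - occ (η ⟨q, hq⟩)) := by
    intro η
    unfold LN
    rw [LS_apply, LR_apply, LC_apply, LA_apply, L01_apply, Lbulk_apply, Lright_apply]
    simp only [show ((⟨q, hq⟩ : Fin (N+p)) : ℕ) = q from rfl]
    by_cases hc : q = p+1
    · subst hc
      rw [dif_neg (by omega), dif_neg (by omega), dif_neg (by omega), dif_neg (by omega),
        dif_neg (by omega), if_neg (by omega), if_pos rfl, dif_pos (by omega),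
        dif_neg (by omega), if_neg (by omega)]
      have e1 : (⟨p, by omega⟩ : Fin (N+p)) = ⟨p+1-1, by omega⟩ := rfl
      rw [e1]
      ring
    · rw [dif_neg (by omega), dif_neg (by omega), dif_neg (by omega), dif_neg (by omega),
        dif_neg (by omega), if_neg (by omega), if_neg hc, dif_pos (by omega),
        dif_pos (by omega), if_neg (by omega)]
      ring
  have h0 := hμ.2.2 (fun ζ => occ (ζ ⟨q, hq⟩))
  have h0' : ∑ η, μ η * ((occ (η ⟨q+1, by omega⟩) - occ (η ⟨q, hq⟩))
      + (occ (η ⟨q-1, by omega⟩) - occ (η ⟨q, hq⟩))) = 0 := by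
    rw [← h0]
    exact Finset.sum_congr rfl (fun η _ => by rw [key η])
  simp only [mul_add] at h0'
  rw [Finset.sum_add_distrib, exp_occ_sub, exp_occ_sub] at h0'
  linarith
lemma EqLeft (N p : ℕ) (hN : 2 ≤ N) (r α : Fin (p+1) → ℝ)
    (cR aR : Fin (p+1) → Fin (p+1) → ℝ) (β : ℝ) (μ : (Fin (N+p) → Bool) → ℝ)
    (hμ : IsStationaryGen (LN N p hN r α cR aR β) μ) (hN1 : 1 ≤ N) (j : Fin (p+1)) :
    0 = r j * (α j - rhoN μ (emb N p hN1 j))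
      + (∑ k, cR j k * (rhoN μ (emb N p hN1 k) - rhoN μ (emb N p hN1 j)))
      + (∑ k, aR j k * (1 - rhoN μ (emb N p hN1 j) - rhoN μ (emb N p hN1 k)))
      + ((if j.1 < p then
            rhoN μ ⟨j.1+1, by have := j.isLt; omega⟩ - rhoN μ (emb N p hN1 j) else 0)
        + (if 1 ≤ j.1 ∧ j.1 ≤ p then
            rhoN μ ⟨j.1-1, by have := j.isLt; omega⟩ - rhoN μ (emb N p hN1 j) else 0)
        + (if j.1 = p then rhoN μ ⟨p+1, by omega⟩ - rhoN μ (emb N p hN1 j) else 0)) := by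
  have hjp : j.1 ≤ p := by have := j.isLt; omega
  have key : ∀ η : Fin (N+p) → Bool,
      LN N p hN r α cR aR β (fun ζ => occ (ζ (emb N p hN1 j))) η
      = r j * (α j - occ (η (emb N p hN1 j)))
        + (∑ k, cR j k * (occ (η (emb N p hN1 k)) - occ (η (emb N p hN1 j))))
        + (∑ k, aR j k * (1 - occ (η (emb N p hN1 j)) - occ (η (emb N p hN1 k))))
        + ((if j.1 < p then
              occ (η ⟨j.1+1, by have := j.isLt; omega⟩) - occ (η (emb N p hN1 j)) else 0)
          + (if 1 ≤ j.1 ∧ j.1 ≤ p then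
              occ (η ⟨j.1-1, by have := j.isLt; omega⟩) - occ (η (emb N p hN1 j)) else 0)
          + (if j.1 = p then occ (η ⟨p+1, by omega⟩) - occ (η (emb N p hN1 j)) else 0)) := by
    intro η
    unfold LN
    rw [LS_apply, LR_apply, LC_apply, LA_apply, L01_apply, Lbulk_apply, Lright_apply]
    simp only [show ((emb N p hN1 j : Fin (N+p)) : ℕ) = j.1 from rfl]
    rw [dif_pos hjp, dif_pos hjp, dif_pos hjp,
      dif_neg (show ¬(p+1 ≤ j.1 ∧ j.1 < N+p-1) by omega),
      dif_neg (show ¬(p+2 ≤ j.1) by omega),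
      if_neg (show ¬(j.1 = p+1) by omega),
      if_neg (show ¬(j.1 = N+p-1) by omega)]
    simp only [Fin.eta]
    by_cases h1 : (j : ℕ) < p <;> by_cases h2 : 1 ≤ (j : ℕ)
    · simp only [dif_pos h1, if_pos h1, dif_pos (show 1 ≤ (j:ℕ) ∧ (j:ℕ) ≤ p from ⟨h2, hjp⟩),
        if_pos (show 1 ≤ (j:ℕ) ∧ (j:ℕ) ≤ p from ⟨h2, hjp⟩),
        if_neg (show ¬((j:ℕ) = p) by omega)]
      ring
    · simp only [dif_pos h1, if_pos h1,
        dif_neg (show ¬(1 ≤ (j:ℕ) ∧ (j:ℕ) ≤ p) from fun hh => h2 hh.1),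
        if_neg (show ¬(1 ≤ (j:ℕ) ∧ (j:ℕ) ≤ p) from fun hh => h2 hh.1),
        if_neg (show ¬((j:ℕ) = p) by omega)]
      ring
    · simp only [dif_neg h1, if_neg h1, dif_pos (show 1 ≤ (j:ℕ) ∧ (j:ℕ) ≤ p from ⟨h2, hjp⟩),
        if_pos (show 1 ≤ (j:ℕ) ∧ (j:ℕ) ≤ p from ⟨h2, hjp⟩),
        if_pos (show (j:ℕ) = p by omega)]
      ring
    · simp only [dif_neg h1, if_neg h1,
        dif_neg (show ¬(1 ≤ (j:ℕ) ∧ (j:ℕ) ≤ p) from fun hh => h2 hh.1),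
        if_neg (show ¬(1 ≤ (j:ℕ) ∧ (j:ℕ) ≤ p) from fun hh => h2 hh.1),
        if_pos (show (j:ℕ) = p by omega)]
      ring
  have hs := hμ.2.1
  have h0 := hμ.2.2 (fun ζ => occ (ζ (emb N p hN1 j)))
  have h0' : ∑ η, μ η *
      (r j * (α j - occ (η (emb N p hN1 j)))
        + (∑ k, cR j k * (occ (η (emb N p hN1 k)) - occ (η (emb N p hN1 j))))
        + (∑ k, aR j k * (1 - occ (η (emb N p hN1 j)) - occ (η (emb N p hN1 k))))
        + ((if j.1 < p then
              occ (η ⟨j.1+1, by have := j.isLt; omega⟩) - occ (η (emb N p hN1 j)) else 0)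
          + (if 1 ≤ j.1 ∧ j.1 ≤ p then
              occ (η ⟨j.1-1, by have := j.isLt; omega⟩) - occ (η (emb N p hN1 j)) else 0)
          + (if j.1 = p then occ (η ⟨p+1, by omega⟩) - occ (η (emb N p hN1 j)) else 0)))
        = 0 := by
    refine Eq.trans ?_ h0
    exact Finset.sum_congr rfl (fun η _ => by rw [key η])
  simp only [mul_add] at h0'
  rw [Finset.sum_add_distrib, Finset.sum_add_distrib, Finset.sum_add_distrib,
    Finset.sum_add_distrib, Finset.sum_add_distrib,
    exp_c_sub μ hs, exp_csum μ, exp_asum μ hs, exp_ite μ, exp_ite μ, exp_ite μ] at h0'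
  linarith
/-- The linearized left-boundary operator. -/
def MopL (p : ℕ) (hp : 1 ≤ p) (r : Fin (p+1) → ℝ) (cR aR : Fin (p+1) → Fin (p+1) → ℝ) :
    (Fin (p+1) → ℝ) →ₗ[ℝ] (Fin (p+1) → ℝ) where
  toFun x := fun j => -(r j * x j) + (∑ k, cR j k * (x k - x j))
    + (∑ k, aR j k * (-(x k) - x j)) + TSum p hp x j
  map_add' x y := by
    funext j
    have t1 : TSum p hp (x + y) j = TSum p hp x j + TSum p hp y j := by
      simp only [TSum, Pi.add_apply]
      split_ifs <;> ring
    have t2 : ∑ k, cR j k * ((x k + y k) - (x j + y j))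
        = (∑ k, cR j k * (x k - x j)) + ∑ k, cR j k * (y k - y j) := by
      rw [← Finset.sum_add_distrib]
      exact Finset.sum_congr rfl fun k _ => by ring
    have t3 : ∑ k, aR j k * (-(x k + y k) - (x j + y j))
        = (∑ k, aR j k * (-(x k) - x j)) + ∑ k, aR j k * (-(y k) - y j) := by
      rw [← Finset.sum_add_distrib]
      exact Finset.sum_congr rfl fun k _ => by ring
    simp only [Pi.add_apply]
    rw [t1, t2, t3]
    ring
  map_smul' c x := by
    funext j
    have t1 : TSum p hp (c • x) j = c * TSum p hp x j := by
      simp only [TSum, Pi.smul_apply, smul_eq_mul]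
      split_ifs <;> ring
    have t2 : ∑ k, cR j k * (c * x k - c * x j) = c * ∑ k, cR j k * (x k - x j) := by
      rw [Finset.mul_sum]
      exact Finset.sum_congr rfl fun k _ => by ring
    have t3 : ∑ k, aR j k * (-(c * x k) - c * x j)
        = c * ∑ k, aR j k * (-(x k) - x j) := by
      rw [Finset.mul_sum]
      exact Finset.sum_congr rfl fun k _ => by ring
    simp only [Pi.smul_apply, smul_eq_mul, RingHom.id_apply]
    rw [t1, t2, t3]
    ring
lemma max_prop (p : ℕ) (hp : 1 ≤ p) (r : Fin (p+1) → ℝ) (cR aR : Fin (p+1) → Fin (p+1) → ℝ)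
    (hr : ∀ j, 0 ≤ r j) (hc : ∀ j k, 0 ≤ cR j k) (ha : ∀ j k, 0 ≤ aR j k)
    (x : Fin (p+1) → ℝ)
    (hx : ∀ j, -(r j * x j) + (∑ k, cR j k * (x k - x j))
      + (∑ k, aR j k * (-(x k) - x j)) + TSum p hp x j = 0)
    (t : ℝ) (ht : ∀ j, x j ≤ t) (htabs : ∀ j, -t ≤ x j)
    (j₀ : Fin (p+1)) (hj₀ : x j₀ = t) :
    ∀ j, x j = t := by
  have xeq : ∀ (a b : Fin (p+1)), a.1 = b.1 → x a = x b := fun a b h => by rw [Fin.ext h]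
  have ht0 : 0 ≤ t := by linarith [htabs j₀, ht j₀, hj₀]
  -- single step propagation from a maximal point
  have step : ∀ j : Fin (p+1), x j = t →
      (∀ _hlt : j.1 < p, x ⟨j.1+1, by omega⟩ = t)
        ∧ (∀ _hge : 1 ≤ j.1, x ⟨j.1-1, by have := j.isLt; omega⟩ = t) := by
    intro j hj
    have h0 := hx j
    have e1 : -(r j * x j) ≤ 0 := by
      rw [hj]
      have := mul_nonneg (hr j) ht0
      linarith
    have e2 : (∑ k, cR j k * (x k - x j)) ≤ 0 :=
      Finset.sum_nonpos fun k _ =>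
        mul_nonpos_of_nonneg_of_nonpos (hc j k) (by rw [hj]; linarith [ht k])
    have e3 : (∑ k, aR j k * (-(x k) - x j)) ≤ 0 :=
      Finset.sum_nonpos fun k _ =>
        mul_nonpos_of_nonneg_of_nonpos (ha j k) (by rw [hj]; linarith [htabs k])
    have e4 : TSum p hp x j ≤ 0 := by
      unfold TSum
      split_ifs with hA hB
      · have hjz : x ⟨0, by omega⟩ = t := (xeq _ j hA.symm).trans hj
        linarith [ht ⟨1, by omega⟩]
      · have hjp' : x ⟨p, by omega⟩ = t := (xeq _ j hB.symm).trans hj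
        linarith [ht ⟨p-1, by omega⟩]
      · rw [hj]
        linarith [ht ⟨j.1+1, by have := j.isLt; omega⟩, ht ⟨j.1-1, by have := j.isLt; omega⟩]
    have e4' : TSum p hp x j = 0 := by linarith
    unfold TSum at e4'
    constructor
    · intro hjp1
      split_ifs at e4' with hA hB
      · have hjz : x ⟨0, by omega⟩ = t := (xeq _ j hA.symm).trans hj
        have : x ⟨1, by omega⟩ = t := by linarith
        exact (xeq _ _ (show j.1+1 = 1 by omega)).trans this
      · omega
      · have h5 := ht ⟨j.1+1, by have := j.isLt; omega⟩
        have h6 := ht ⟨j.1-1, by have := j.isLt; omega⟩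
        rw [hj] at e4'
        linarith
    · intro hj1
      split_ifs at e4' with hA hB
      · omega
      · have hjp' : x ⟨p, by omega⟩ = t := (xeq _ j hB.symm).trans hj
        have : x ⟨p-1, by omega⟩ = t := by linarith
        exact (xeq _ _ (show j.1-1 = p-1 by omega)).trans this
      · have h5 := ht ⟨j.1+1, by have := j.isLt; omega⟩
        have h6 := ht ⟨j.1-1, by have := j.isLt; omega⟩
        rw [hj] at e4'
        linarith
  have up : ∀ m : ℕ, ∀ _hm : j₀.1 + m ≤ p, x ⟨j₀.1 + m, by omega⟩ = t := by
    intro m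
    induction m with
    | zero => intro _; exact (xeq _ j₀ rfl).trans hj₀
    | succ m ih =>
      intro hm
      have prev := ih (by omega)
      have st := (step ⟨j₀.1 + m, by omega⟩ prev).1 (show j₀.1 + m < p by omega)
      exact (xeq _ _ rfl).trans st
  have down : ∀ m : ℕ, ∀ _hm : m ≤ j₀.1, x ⟨j₀.1 - m, by have := j₀.isLt; omega⟩ = t := by
    intro m
    induction m with
    | zero => intro _; exact (xeq _ j₀ rfl).trans hj₀
    | succ m ih =>
      intro hm
      have prev := ih (by omega)
      have st := (step ⟨j₀.1 - m, by have := j₀.isLt; omega⟩ prev).2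
        (show 1 ≤ j₀.1 - m by omega)
      exact (xeq _ _ rfl).trans st
  intro j
  rcases le_or_gt j₀.1 j.1 with hle | hlt
  · have h2 := up (j.1 - j₀.1) (by have := j.isLt; omega)
    exact (xeq j _ (show j.1 = j₀.1 + (j.1 - j₀.1) by omega)).trans h2
  · have h2 := down (j₀.1 - j.1) (by omega)
    exact (xeq j _ (show j.1 = j₀.1 - (j₀.1 - j.1) by omega)).trans h2
lemma MopL_inj (p : ℕ) (hp : 1 ≤ p) (r : Fin (p+1) → ℝ) (cR aR : Fin (p+1) → Fin (p+1) → ℝ)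
    (hr : ∀ j, 0 ≤ r j) (hc : ∀ j k, 0 ≤ cR j k) (ha : ∀ j k, 0 ≤ aR j k)
    (hpos : 0 < (∑ j, r j) + ∑ j, ∑ k, aR j k) :
    Function.Injective (MopL p hp r cR aR) := by
  rw [injective_iff_map_eq_zero]
  intro x hx
  have hx' : ∀ j, -(r j * x j) + (∑ k, cR j k * (x k - x j))
      + (∑ k, aR j k * (-(x k) - x j)) + TSum p hp x j = 0 := by
    intro j
    have := congrFun hx j
    simpa [MopL] using this
  obtain ⟨j₀, -, hj₀⟩ := Finset.exists_mem_eq_sup' Finset.univ_nonempty (fun j => |x j|)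
  have htb : ∀ j, |x j| ≤ |x j₀| := fun j =>
    le_of_le_of_eq (Finset.le_sup' (fun j => |x j|) (Finset.mem_univ j)) hj₀
  have ht0 : (0:ℝ) ≤ |x j₀| := abs_nonneg _
  have ht00 : |x j₀| = 0 := by
    by_contra hne
    have htpos : (0:ℝ) < |x j₀| := lt_of_le_of_ne ht0 (Ne.symm hne)
    obtain ⟨u, hu_eq, hu_all⟩ : ∃ u : Fin (p+1) → ℝ,
        (∀ j, -(r j * u j) + (∑ k, cR j k * (u k - u j))
          + (∑ k, aR j k * (-(u k) - u j)) + TSum p hp u j = 0) ∧ ∀ j, u j = |x j₀| := by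
      rcases abs_cases (x j₀) with ⟨hcase, -⟩ | ⟨hcase, -⟩
      · exact ⟨x, hx', max_prop p hp r cR aR hr hc ha x hx' _
          (fun j => (abs_le.mp (htb j)).2) (fun j => (abs_le.mp (htb j)).1) j₀
          hcase.symm⟩
      · have hyeq : ∀ j, -(r j * (-(x j))) + (∑ k, cR j k * ((-(x k)) - (-(x j))))
            + (∑ k, aR j k * (-(-(x k)) - (-(x j)))) + TSum p hp (fun i => -(x i)) j = 0 := by
          intro j
          have h1 : TSum p hp (fun i => -(x i)) j = -(TSum p hp x j) := by
            simp only [TSum]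
            split_ifs <;> ring
          have h2 : ∑ k, cR j k * ((-(x k)) - (-(x j))) = -∑ k, cR j k * (x k - x j) := by
            rw [← Finset.sum_neg_distrib]
            exact Finset.sum_congr rfl fun k _ => by ring
          have h3 : ∑ k, aR j k * (-(-(x k)) - (-(x j)))
              = -∑ k, aR j k * (-(x k) - x j) := by
            rw [← Finset.sum_neg_distrib]
            exact Finset.sum_congr rfl fun k _ => by ring
          rw [h1, h2, h3]
          linear_combination -(hx' j)
        exact ⟨fun i => -(x i), hyeq, max_prop p hp r cR aR hr hc ha _ hyeq _
          (fun j => show -(x j) ≤ |x j₀| from by linarith [(abs_le.mp (htb j)).1])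
          (fun j => show -(|x j₀|) ≤ -(x j) from by linarith [(abs_le.mp (htb j)).2]) j₀
          (show -(x j₀) = |x j₀| from hcase.symm)⟩
    have hTu : ∀ j, TSum p hp u j = 0 := by
      intro j
      simp only [TSum]
      split_ifs <;> simp [hu_all] <;> ring
    have hCu : ∀ j, ∑ k, cR j k * (u k - u j) = 0 := fun j =>
      Finset.sum_eq_zero fun k _ => by rw [hu_all, hu_all]; ring
    have key : ∀ j, r j * |x j₀| + (∑ k, aR j k) * (2*|x j₀|) = 0 := by
      intro j
      have h0 := hu_eq j
      rw [hTu, hCu] at h0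
      have hAu : ∑ k, aR j k * (-(u k) - u j) = -((∑ k, aR j k) * (2*|x j₀|)) := by
        calc ∑ k, aR j k * (-(u k) - u j) = ∑ k, aR j k * (-(2*|x j₀|)) :=
              Finset.sum_congr rfl fun k _ => by rw [hu_all, hu_all]; ring
        _ = (∑ k, aR j k) * (-(2*|x j₀|)) := by rw [Finset.sum_mul]
        _ = -((∑ k, aR j k) * (2*|x j₀|)) := by ring
      rw [hAu, hu_all] at h0
      linarith
    have hrt : ∀ j, r j * |x j₀| = 0 ∧ (∑ k, aR j k) * (2*|x j₀|) = 0 := by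
      intro j
      have h1 : 0 ≤ r j * |x j₀| := mul_nonneg (hr j) ht0
      have h2 : 0 ≤ (∑ k, aR j k) * (2*|x j₀|) :=
        mul_nonneg (Finset.sum_nonneg fun k _ => ha j k) (by linarith)
      constructor <;> linarith [key j]
    have hr0 : ∀ j, r j = 0 := by
      intro j
      rcases mul_eq_zero.mp (hrt j).1 with h | h
      · exact h
      · exact absurd h (ne_of_gt htpos)
    have ha0 : ∀ j, ∑ k, aR j k = 0 := by
      intro j
      rcases mul_eq_zero.mp (hrt j).2 with h | h
      · exact h
      · exfalso
        linarith
    rw [Finset.sum_congr rfl (fun j _ => hr0 j), Finset.sum_congr rfl (fun j _ => ha0 j)]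
      at hpos
    simp at hpos
  funext j
  have := htb j
  rw [ht00] at this
  exact abs_nonpos_iff.mp this
lemma slope_const (N p : ℕ) (hN : 2 ≤ N) (r α : Fin (p+1) → ℝ)
    (cR aR : Fin (p+1) → Fin (p+1) → ℝ) (β : ℝ) (μ : (Fin (N+p) → Bool) → ℝ)
    (hμ : IsStationaryGen (LN N p hN r α cR aR β) μ) :
    ∀ m : ℕ, ∀ _hm : m ≤ N-2,
      rhoN μ ⟨p+m+1, by omega⟩ - rhoN μ ⟨p+m, by omega⟩
        = rhoN μ ⟨p+1, by omega⟩ - rhoN μ ⟨p, by omega⟩ := by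
  intro m
  induction m with
  | zero => intro _; rfl
  | succ m ih =>
    intro hm
    have prev := ih (by omega)
    have e : (0:ℝ) = (rhoN μ ⟨p+m+2, by omega⟩ - rhoN μ ⟨p+m+1, by omega⟩)
        + (rhoN μ ⟨p+m, by omega⟩ - rhoN μ ⟨p+m+1, by omega⟩) :=
      EqBulk N p hN r α cR aR β μ hμ (p+m+1) (by omega) (by omega)
    show rhoN μ ⟨p+m+2, by omega⟩ - rhoN μ ⟨p+m+1, by omega⟩ = _
    linarith [prev, e]

lemma tele (N p : ℕ) (hN : 2 ≤ N) (r α : Fin (p+1) → ℝ)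
    (cR aR : Fin (p+1) → Fin (p+1) → ℝ) (β : ℝ) (μ : (Fin (N+p) → Bool) → ℝ)
    (hμ : IsStationaryGen (LN N p hN r α cR aR β) μ) :
    ∀ m : ℕ, ∀ _hm : m ≤ N-1,
      rhoN μ ⟨p+m, by omega⟩ - rhoN μ ⟨p, by omega⟩
        = (m:ℝ) * (rhoN μ ⟨p+1, by omega⟩ - rhoN μ ⟨p, by omega⟩) := by
  intro m
  induction m with
  | zero => intro _; simp
  | succ m ih =>
    intro hm
    have prev := ih (by omega)
    have hsl := slope_const N p hN r α cR aR β μ hμ m (by omega)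
    show rhoN μ ⟨p+m+1, by omega⟩ - rhoN μ ⟨p, by omega⟩ = _
    push_cast
    linarith [prev, hsl]

lemma s_bound (N p : ℕ) (hN : 2 ≤ N) (r α : Fin (p+1) → ℝ)
    (cR aR : Fin (p+1) → Fin (p+1) → ℝ) (β : ℝ) (μ : (Fin (N+p) → Bool) → ℝ)
    (hμ : IsStationaryGen (LN N p hN r α cR aR β) μ)
    (hpr : ∀ x, 0 ≤ μ x) (hs1 : ∑ η, μ η = 1) :
    |rhoN μ ⟨p+1, by omega⟩ - rhoN μ ⟨p, by omega⟩| ≤ 2/(N:ℝ) := by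
  have ht := tele N p hN r α cR aR β μ hμ (N-1) (by omega)
  have b1 : 0 ≤ rhoN μ ⟨p+(N-1), by omega⟩ := rhoN_nonneg μ hpr _
  have b2 : rhoN μ ⟨p+(N-1), by omega⟩ ≤ 1 := rhoN_le_one μ hpr hs1 _
  have b3 : 0 ≤ rhoN μ ⟨p, by omega⟩ := rhoN_nonneg μ hpr _
  have b4 : rhoN μ ⟨p, by omega⟩ ≤ 1 := rhoN_le_one μ hpr hs1 _
  have habs : |((N-1:ℕ):ℝ) * (rhoN μ ⟨p+1, by omega⟩ - rhoN μ ⟨p, by omega⟩)| ≤ 1 := by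
    rw [← ht, abs_le]
    constructor <;> linarith
  rw [abs_mul] at habs
  have hc : |((N-1:ℕ):ℝ)| = (N:ℝ) - 1 := by
    rw [abs_of_nonneg (by positivity)]
    push_cast [Nat.cast_sub (by omega : 1 ≤ N)]
    ring
  rw [hc] at habs
  have hN2 : (2:ℝ) ≤ (N:ℝ) := by exact_mod_cast hN
  rw [le_div_iff₀ (by linarith : (0:ℝ) < (N:ℝ))]
  nlinarith [abs_nonneg (rhoN μ ⟨p+1, by omega⟩ - rhoN μ ⟨p, by omega⟩), habs]

lemma Tpart_eq (N p : ℕ) (hN : 2 ≤ N) (hp : 1 ≤ p) (μ : (Fin (N+p) → Bool) → ℝ)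
    (hN1 : 1 ≤ N) (j : Fin (p+1)) :
    (if (j:ℕ) < p then
        rhoN μ ⟨(j:ℕ)+1, by have := j.isLt; omega⟩ - rhoN μ (emb N p hN1 j) else 0)
    + (if 1 ≤ (j:ℕ) ∧ (j:ℕ) ≤ p then
        rhoN μ ⟨(j:ℕ)-1, by have := j.isLt; omega⟩ - rhoN μ (emb N p hN1 j) else 0)
    + (if (j:ℕ) = p then rhoN μ ⟨p+1, by omega⟩ - rhoN μ (emb N p hN1 j) else 0)
    = TSum p hp (fun k => rhoN μ (emb N p hN1 k)) j
      + (if (j:ℕ) = p then rhoN μ ⟨p+1, by omega⟩ - rhoN μ ⟨p, by omega⟩ else 0) := by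
  have hjp : (j:ℕ) ≤ p := by have := j.isLt; omega
  have req : ∀ (a b : Fin (N+p)), a.1 = b.1 → rhoN μ a = rhoN μ b :=
    fun a b h => by rw [Fin.ext h]
  unfold TSum
  simp only [emb]
  by_cases hA : (j:ℕ) = 0
  · rw [if_pos (show (j:ℕ) < p by omega),
      if_neg (show ¬(1 ≤ (j:ℕ) ∧ (j:ℕ) ≤ p) by omega),
      if_neg (show ¬((j:ℕ) = p) by omega),
      if_neg (show ¬((j:ℕ) = p) by omega),
      if_pos hA]
    have e1 : rhoN μ ⟨(j:ℕ)+1, by have := j.isLt; omega⟩ = rhoN μ ⟨1, by omega⟩ :=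
      req _ _ (show (j:ℕ)+1 = 1 by omega)
    have e2 : rhoN μ ⟨(j:ℕ), by have := j.isLt; omega⟩ = rhoN μ ⟨0, by omega⟩ :=
      req _ _ (show (j:ℕ) = 0 by omega)
    linarith [e1, e2]
  · by_cases hB : (j:ℕ) = p
    · rw [if_neg (show ¬((j:ℕ) < p) by omega),
        if_pos (show 1 ≤ (j:ℕ) ∧ (j:ℕ) ≤ p by omega),
        if_pos hB, if_pos hB,
        if_neg (show ¬((j:ℕ) = 0) by omega), dif_pos hB]
      have e1 : rhoN μ ⟨(j:ℕ)-1, by have := j.isLt; omega⟩ = rhoN μ ⟨p-1, by omega⟩ :=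
        req _ _ (show (j:ℕ)-1 = p-1 by omega)
      have e2 : rhoN μ ⟨(j:ℕ), by have := j.isLt; omega⟩ = rhoN μ ⟨p, by omega⟩ :=
        req _ _ (show (j:ℕ) = p by omega)
      linarith [e1, e2]
    · rw [if_pos (show (j:ℕ) < p by omega),
        if_pos (show 1 ≤ (j:ℕ) ∧ (j:ℕ) ≤ p by omega),
        if_neg hB, if_neg hB,
        if_neg (show ¬((j:ℕ) = 0) by omega), dif_neg hB]
      ring
/-- if `Σ_j r_j + Σ_{j,k} a_{j,k} > 0` and `ρ` solves the system (*),
then `|ρ_N(k) − ρ(k)| ≤ C₀/N` for all sites `-p ≤ k ≤ 0`, uniformly in `N`. -/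
theorem stmt7 (p : ℕ) (hp : 1 ≤ p) (β : ℝ) (hβ0 : 0 < β) (hβ1 : β < 1)
    (r α : Fin (p+1) → ℝ) (cR aR : Fin (p+1) → Fin (p+1) → ℝ)
    (hr : ∀ j, 0 ≤ r j) (hα0 : ∀ j, 0 ≤ α j) (hα1 : ∀ j, α j ≤ 1)
    (hc : ∀ j k, 0 ≤ cR j k) (ha : ∀ j k, 0 ≤ aR j k)
    (hcd : ∀ j, cR j j = 0) (had : ∀ j, aR j j = 0)
    (hpos : 0 < (∑ j, r j) + ∑ j, ∑ k, aR j k)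
    (ρ : Fin (p+1) → ℝ)
    (hρ : ∀ j : Fin (p+1),
      0 = r j * (α j - ρ j) + CSum p cR ρ j + ASum p aR ρ j + TSum p hp ρ j) :
    ∃ C₀ : ℝ, ∀ (N : ℕ) (hN : 2 ≤ N) (μ : (Fin (N+p) → Bool) → ℝ),
      IsStationaryGen (LN N p hN r α cR aR β) μ →
      ∀ j : Fin (p+1),
        |expVal μ (fun η => occ (η (emb N p (by omega) j))) - ρ j| ≤ C₀ / N := by
  have hinj := MopL_inj p hp r cR aR hr hc ha hpos
  have hsurj : Function.Surjective (MopL p hp r cR aR) :=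
    LinearMap.injective_iff_surjective.mp hinj
  obtain ⟨w, hw⟩ := hsurj (fun j : Fin (p+1) => if (j:ℕ) = p then (1:ℝ) else 0)
  refine ⟨2 * ∑ k, |w k|, ?_⟩
  intro N hN μ hμ j
  have hN1 : 1 ≤ N := by omega
  have he : (MopL p hp r cR aR) (fun k => rhoN μ (emb N p hN1 k) - ρ k)
      = (-(rhoN μ ⟨p+1, by omega⟩ - rhoN μ ⟨p, by omega⟩)) •
          (fun j : Fin (p+1) => if (j:ℕ) = p then (1:ℝ) else 0) := by
    funext i
    show -(r i * (rhoN μ (emb N p hN1 i) - ρ i))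
        + (∑ k, cR i k * ((rhoN μ (emb N p hN1 k) - ρ k) - (rhoN μ (emb N p hN1 i) - ρ i)))
        + (∑ k, aR i k * (-(rhoN μ (emb N p hN1 k) - ρ k) - (rhoN μ (emb N p hN1 i) - ρ i)))
        + TSum p hp (fun k => rhoN μ (emb N p hN1 k) - ρ k) i
      = (-(rhoN μ ⟨p+1, by omega⟩ - rhoN μ ⟨p, by omega⟩)) * (if (i:ℕ) = p then (1:ℝ) else 0)
    have hEL := EqLeft N p hN r α cR aR β μ hμ hN1 i
    rw [Tpart_eq N p hN hp μ hN1 i] at hEL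
    have hρi := hρ i
    simp only [CSum, ASum] at hρi
    have c0 : -(r i * (rhoN μ (emb N p hN1 i) - ρ i))
        = r i * (α i - rhoN μ (emb N p hN1 i)) - r i * (α i - ρ i) := by ring
    have c1 : ∑ k, cR i k * ((rhoN μ (emb N p hN1 k) - ρ k) - (rhoN μ (emb N p hN1 i) - ρ i))
        = (∑ k, cR i k * (rhoN μ (emb N p hN1 k) - rhoN μ (emb N p hN1 i)))
          - ∑ k, cR i k * (ρ k - ρ i) := by
      rw [← Finset.sum_sub_distrib]
      exact Finset.sum_congr rfl fun k _ => by ring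
    have c2 : ∑ k, aR i k * (-(rhoN μ (emb N p hN1 k) - ρ k) - (rhoN μ (emb N p hN1 i) - ρ i))
        = (∑ k, aR i k * (1 - rhoN μ (emb N p hN1 i) - rhoN μ (emb N p hN1 k)))
          - ∑ k, aR i k * (1 - ρ k - ρ i) := by
      rw [← Finset.sum_sub_distrib]
      exact Finset.sum_congr rfl fun k _ => by ring
    have c3 : TSum p hp (fun k => rhoN μ (emb N p hN1 k) - ρ k) i
        = TSum p hp (fun k => rhoN μ (emb N p hN1 k)) i - TSum p hp ρ i := by
      simp only [TSum]
      split_ifs <;> ring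
    have c4 : (-(rhoN μ ⟨p+1, by omega⟩ - rhoN μ ⟨p, by omega⟩)) *
          (if (i:ℕ) = p then (1:ℝ) else 0)
        = -(if (i:ℕ) = p then rhoN μ ⟨p+1, by omega⟩ - rhoN μ ⟨p, by omega⟩ else 0) := by
      split_ifs <;> ring
    rw [c0, c1, c2, c3, c4]
    linarith [hEL, hρi]
  have hw2 : (MopL p hp r cR aR)
      ((-(rhoN μ ⟨p+1, by omega⟩ - rhoN μ ⟨p, by omega⟩)) • w)
      = (-(rhoN μ ⟨p+1, by omega⟩ - rhoN μ ⟨p, by omega⟩)) •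
          (fun j : Fin (p+1) => if (j:ℕ) = p then (1:ℝ) else 0) := by
    rw [map_smul, hw]
  have he2 : (fun k => rhoN μ (emb N p hN1 k) - ρ k)
      = (-(rhoN μ ⟨p+1, by omega⟩ - rhoN μ ⟨p, by omega⟩)) • w :=
    hinj (he.trans hw2.symm)
  have hsb := s_bound N p hN r α cR aR β μ hμ hμ.1 hμ.2.1
  have hj := congrFun he2 j
  show |rhoN μ (emb N p hN1 j) - ρ j| ≤ 2 * (∑ k, |w k|) / N
  rw [hj]
  have h1 : |((-(rhoN μ ⟨p+1, by omega⟩ - rhoN μ ⟨p, by omega⟩)) • w) j|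
      = |rhoN μ ⟨p+1, by omega⟩ - rhoN μ ⟨p, by omega⟩| * |w j| := by
    show |(-(rhoN μ ⟨p+1, by omega⟩ - rhoN μ ⟨p, by omega⟩)) * w j| = _
    rw [abs_mul, abs_neg]
  rw [h1]
  have h2 : |w j| ≤ ∑ k, |w k| :=
    Finset.single_le_sum (f := fun k => |w k|) (fun k _ => abs_nonneg _) (Finset.mem_univ j)
  calc |rhoN μ ⟨p+1, by omega⟩ - rhoN μ ⟨p, by omega⟩| * |w j|
      ≤ (2/(N:ℝ)) * (∑ k, |w k|) :=
        mul_le_mul hsb h2 (abs_nonneg _) (by positivity)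
    _ = 2 * (∑ k, |w k|) / N := by ring
end
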